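/- Let M be a finitely generated ℤ-graded k[v]-module and suppose there exists a σ_k-semilinear bijection φ: M/vM → M/(v−1)M. Then M is a free k[v]-module. (This is the assertion that the pullback of a Fontaine–Laffaille module killed by p to the affine line over k is a vector bundle.) -/

import Mathlib

set_option linter.unusedSectionVars false
set_option maxHeartbeats 1000000
set_option synthInstance.maxHeartbeats 400000

section AuxHelpers

variable {k : Type*} [Field k] {P : Type*} [AddCommGroup P] [Module k P]
    [Module (Polynomial k) P] [IsScalarTower k (Polynomial k) P]

private lemma aux_smul_comm (c : k) (f : Polynomial k) (x : P) :
    f • (c • x) = c • (f • x) := by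
  rw [← algebraMap_smul (Polynomial k) c x, ← algebraMap_smul (Polynomial k) c (f • x),
    smul_smul, smul_smul, mul_comm]

private lemma aux_poly_smul_mem {N : Submodule k P}
    (hN : ∀ x ∈ N, (Polynomial.X : Polynomial k) • x ∈ N)
    (f : Polynomial k) {x : P} (hx : x ∈ N) : f • x ∈ N := by
  have hXn : ∀ m : ℕ, (Polynomial.X : Polynomial k) ^ m • x ∈ N := by
    intro m
    induction m with
    | zero => simpa using hx
    | succ m ih => rw [pow_succ, mul_comm, mul_smul]; exact hN _ ih
  induction f using Polynomial.induction_on' with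
  | add p q hp hq => rw [add_smul]; exact N.add_mem hp hq
  | monomial n c =>
    have : (Polynomial.monomial n c) • x = c • ((Polynomial.X : Polynomial k) ^ n • x) := by
      rw [← Polynomial.C_mul_X_pow_eq_monomial, mul_smul, ← Polynomial.algebraMap_eq,
        algebraMap_smul]
    rw [this]
    exact N.smul_mem _ (hXn n)

private lemma aux_mem_span_smul_top_iff (a : Polynomial k) (x : P) :
    x ∈ Ideal.span {a} • (⊤ : Submodule (Polynomial k) P) ↔ ∃ y, x = a • y := by
  rw [Submodule.ideal_span_singleton_smul]
  constructor
  · intro hx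
    obtain ⟨y, -, hy⟩ := Set.mem_smul_set.mp hx
    exact ⟨y, hy.symm⟩
  · rintro ⟨y, rfl⟩
    exact Submodule.smul_mem_pointwise_smul y a ⊤ Submodule.mem_top

private lemma aux_smul_quot_eval {a : Polynomial k} {r : k}
    (har : ∀ f : Polynomial k, a ∣ f - Polynomial.C (f.eval r))
    (f : Polynomial k) (q : P ⧸ (Ideal.span {a} • (⊤ : Submodule (Polynomial k) P))) :
    f • q = f.eval r • q := by
  obtain ⟨m, rfl⟩ := Submodule.Quotient.mk_surjective _ q
  rw [← Submodule.Quotient.mk_smul, ← Submodule.Quotient.mk_smul, Submodule.Quotient.eq]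
  have h1 : f • m - f.eval r • m = (f - Polynomial.C (f.eval r)) • m := by
    rw [sub_smul]
    congr 1
    rw [← algebraMap_smul (Polynomial k) (f.eval r) m, Polynomial.algebraMap_eq]
  rw [h1]
  exact Submodule.smul_mem_smul (Ideal.mem_span_singleton.2 (har f)) Submodule.mem_top

private lemma aux_finite_quot [Module.Finite (Polynomial k) P]
    {a : Polynomial k} {r : k}
    (har : ∀ f : Polynomial k, a ∣ f - Polynomial.C (f.eval r)) :
    Module.Finite k (P ⧸ (Ideal.span {a} • (⊤ : Submodule (Polynomial k) P))) := by
  haveI : Module.Finite (Polynomial k)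
      (P ⧸ (Ideal.span {a} • (⊤ : Submodule (Polynomial k) P))) :=
    Module.Finite.of_surjective (Submodule.mkQ _) (Submodule.Quotient.mk_surjective _)
  obtain ⟨S, hS⟩ := Module.Finite.fg_top
    (R := Polynomial k) (M := P ⧸ (Ideal.span {a} • (⊤ : Submodule (Polynomial k) P)))
  refine ⟨⟨S, ?_⟩⟩
  rw [eq_top_iff]
  rintro x -
  have hx : x ∈ Submodule.span (Polynomial k) (S : Set _) := hS ▸ Submodule.mem_top
  clear hS
  induction hx using Submodule.span_induction with
  | mem y hy => exact Submodule.subset_span hy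
  | zero => exact Submodule.zero_mem _
  | add y z _ _ hy hz => exact Submodule.add_mem _ hy hz
  | smul f y _ hy =>
    rw [aux_smul_quot_eval har]
    exact Submodule.smul_mem _ _ hy

private lemma aux_basis_quot {ι : Type*} [Fintype ι] (b : Module.Basis ι (Polynomial k) P)
    {a : Polynomial k} {r : k}
    (har : ∀ f : Polynomial k, a ∣ f - Polynomial.C (f.eval r))
    (hroot : a.eval r = 0) :
    Nonempty (Module.Basis ι k (P ⧸ (Ideal.span {a} • (⊤ : Submodule (Polynomial k) P)))) := by
  classical
  have hksmul : ∀ (c : k) (x : P),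
      c • (Submodule.Quotient.mk x :
          P ⧸ (Ideal.span {a} • (⊤ : Submodule (Polynomial k) P)))
        = Submodule.Quotient.mk (Polynomial.C c • x) := by
    intro c x
    rw [← Submodule.Quotient.mk_smul]
    congr 1
    rw [← algebraMap_smul (Polynomial k) c x, Polynomial.algebraMap_eq]
  set v : ι → P ⧸ (Ideal.span {a} • (⊤ : Submodule (Polynomial k) P)) :=
    fun i => Submodule.Quotient.mk (b i) with hv
  have hind : LinearIndependent k v := by
    refine linearIndependent_iff'.2 ?_
    intro s g hg i hi
    have h2 : (Submodule.Quotient.mk (∑ j ∈ s, (Polynomial.C (g j)) • b j) :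
        P ⧸ (Ideal.span {a} • (⊤ : Submodule (Polynomial k) P))) = 0 := by
      rw [← Submodule.mkQ_apply, map_sum, ← hg]
      refine Finset.sum_congr rfl fun j _ => ?_
      rw [Submodule.mkQ_apply, ← hksmul, hv]
    rw [Submodule.Quotient.mk_eq_zero, Submodule.ideal_span_singleton_smul] at h2
    obtain ⟨y, -, hy⟩ := Set.mem_smul_set.mp h2
    have hrepr : Polynomial.C (g i) = a * (b.repr y i) := by
      have := congrArg (fun z => b.repr z i) hy
      simpa [Finsupp.single_apply, Finset.sum_ite_eq', hi, map_sum] using this.symm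
    have := congrArg (fun f : Polynomial k => f.eval r) hrepr
    simpa [hroot] using this
  have hspan : ⊤ ≤ Submodule.span k (Set.range v) := by
    rintro q -
    obtain ⟨x, rfl⟩ := Submodule.Quotient.mk_surjective _ q
    have hx : (Submodule.Quotient.mk x :
        P ⧸ (Ideal.span {a} • (⊤ : Submodule (Polynomial k) P)))
          = ∑ i, (b.repr x i) • v i := by
      conv_lhs => rw [← b.sum_repr x]
      rw [← Submodule.mkQ_apply, map_sum]
      rfl
    rw [hx]
    refine Submodule.sum_mem _ fun i _ => ?_
    rw [aux_smul_quot_eval har]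
    exact Submodule.smul_mem _ _ (Submodule.subset_span ⟨i, rfl⟩)
  exact ⟨Module.Basis.mk hind hspan⟩

private lemma aux_finrank_quot_free [Module.Finite (Polynomial k) P]
    [Module.Free (Polynomial k) P] {a : Polynomial k} {r : k}
    (har : ∀ f : Polynomial k, a ∣ f - Polynomial.C (f.eval r))
    (hroot : a.eval r = 0) :
    Module.finrank k (P ⧸ (Ideal.span {a} • (⊤ : Submodule (Polynomial k) P)))
      = Module.finrank (Polynomial k) P := by
  obtain ⟨bQ⟩ := aux_basis_quot (Module.Free.chooseBasis (Polynomial k) P) har hroot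
  rw [Module.finrank_eq_card_basis bQ, Module.finrank_eq_card_chooseBasisIndex]

private lemma aux_finrank_eq_of_semilinear {σ : k →+* k}
    (hσ : Function.Surjective σ)
    {V W : Type*} [AddCommGroup V] [Module k V] [AddCommGroup W] [Module k W]
    [FiniteDimensional k V]
    (φ : V →ₛₗ[σ] W) (hφ : Function.Bijective φ) :
    Module.finrank k V = Module.finrank k W := by
  classical
  haveI : RingHomSurjective σ := ⟨hσ⟩
  let b := Module.finBasis k V
  have hind : LinearIndependent k (⇑φ ∘ ⇑b) := by
    refine (b.linearIndependent).map_of_surjective_injective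
      (⟨⇑σ, map_zero σ⟩ : ZeroHom k k) φ.toAddMonoidHom hσ
      (fun m h => hφ.1 (by simpa using h)) (fun r m => ?_)
    exact (φ.map_smulₛₗ r m)
  have hspan : ⊤ ≤ Submodule.span k (Set.range (⇑φ ∘ ⇑b)) := by
    rw [Set.range_comp, ← Submodule.map_span, b.span_eq, Submodule.map_top,
      LinearMap.range_eq_top.2 hφ.2]
  let bW := Module.Basis.mk hind hspan
  rw [Module.finrank_eq_card_basis bW, Module.finrank_eq_card_basis b]
  simp

end AuxHelpers

section AuxGrading

variable {k : Type*} [Field k] {M : Type*} [AddCommGroup M] [Module k M]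
    [Module (Polynomial k) M] [IsScalarTower k (Polynomial k) M]

private lemma aux_torsion_X_power [Module.Finite (Polynomial k) M]
    (ℱ : ℤ → Submodule k M) (hint : DirectSum.IsInternal ℱ)
    (hdeg : ∀ i : ℤ, ∀ x ∈ ℱ i, (Polynomial.X : Polynomial k) • x ∈ ℱ (i - 1)) :
    ∀ x ∈ Submodule.torsion (Polynomial k) M,
      ∃ n : ℕ, (Polynomial.X : Polynomial k) ^ n • x = 0 := by
  classical
  let e : (DirectSum ℤ fun i => ℱ i) ≃ₗ[k] M :=
    LinearEquiv.ofBijective (DirectSum.coeLinearMap ℱ) hint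
  let π : (i : ℤ) → (M →ₗ[k] ℱ i) := fun i =>
    (DirectSum.component k ℤ (fun i => ℱ i) i).comp e.symm.toLinearMap
  have hπ_apply : ∀ (i : ℤ) (x : M), (π i x : ℱ i) = e.symm x i := fun _ _ => rfl
  have hπ_ne : ∀ (i j : ℤ), j ≠ i → ∀ x : M, x ∈ ℱ j → π i x = 0 := by
    intro i j hij x hx
    have := hint.ofBijective_coeLinearMap_of_mem_ne (i := j) (j := i) hij hx
    exact this
  have hzero : ∀ x : M, (∀ i, π i x = 0) → x = 0 := by
    intro x hx
    have h0 : e.symm x = 0 := by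
      refine DFinsupp.ext fun i => ?_
      have := hx i
      rw [hπ_apply] at this
      exact this
    have h1 := congrArg e h0
    rw [LinearEquiv.apply_symm_apply] at h1
    rw [h1, map_zero]
  let B : ℤ → Submodule k M := fun c => ⨆ i : ℤ, ⨆ _ : i ≤ c, ℱ i
  have hFB : ∀ (i c : ℤ), i ≤ c → ℱ i ≤ B c := by
    intro i c hic
    exact le_iSup_of_le i (le_iSup_of_le hic le_rfl)
  have hBmono : ∀ {c c' : ℤ}, c ≤ c' → B c ≤ B c' := by
    intro c c' hcc
    refine iSup_le fun i => iSup_le fun hic => hFB i c' (le_trans hic hcc)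
  have hB_ker : ∀ (c i : ℤ), c < i → ∀ x ∈ B c, π i x = 0 := by
    intro c i hci x hx
    have : B c ≤ LinearMap.ker (π i) := by
      refine iSup_le fun j => iSup_le fun hjc => ?_
      intro y hy
      exact LinearMap.mem_ker.2 (hπ_ne i j (by omega) y hy)
    exact LinearMap.mem_ker.1 (this hx)
  let lX : M →ₗ[k] M :=
    { toFun := fun x => (Polynomial.X : Polynomial k) • x
      map_add' := fun x y => smul_add _ x y
      map_smul' := fun c x => (aux_smul_comm c _ x) }
  have hXB : ∀ (c : ℤ), ∀ x ∈ B c, (Polynomial.X : Polynomial k) • x ∈ B (c - 1) := by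
    intro c
    have hmap : Submodule.map lX (B c) ≤ B (c - 1) := by
      rw [Submodule.map_iSup]
      refine iSup_le fun i => ?_
      rw [Submodule.map_iSup]
      refine iSup_le fun hic => ?_
      rintro y ⟨x, hx, rfl⟩
      exact hFB (i - 1) (c - 1) (by omega) (hdeg i x hx)
    intro x hx
    exact hmap ⟨x, hx, rfl⟩
  have hXnB : ∀ (n : ℕ) (c : ℤ), ∀ x ∈ B c,
      (Polynomial.X : Polynomial k) ^ n • x ∈ B (c - n) := by
    intro n
    induction n with
    | zero => intro c x hx; simpa using hx
    | succ n ih =>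
      intro c x hx
      have h1 : (Polynomial.X : Polynomial k) ^ (n + 1) • x
          = (Polynomial.X : Polynomial k) • ((Polynomial.X : Polynomial k) ^ n • x) := by
        rw [pow_succ, mul_comm, mul_smul]
      rw [h1]
      have := hXB (c - n) _ (ih c x hx)
      have hcast : (c - (n : ℤ)) - 1 = c - ((n : ℕ) + 1 : ℕ) := by push_cast; ring
      rwa [hcast] at this
  have hBD : ∃ D : ℤ, ∀ x : M, x ∈ B D := by
    obtain ⟨S, hS⟩ := Module.Finite.fg_top (R := Polynomial k) (M := M)
    have hGen : ∀ g : M, ∃ c, g ∈ B c := by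
      intro g
      have hg : g ∈ ⨆ i, ℱ i := by rw [hint.submodule_iSup_eq_top]; trivial
      refine Submodule.iSup_induction (motive := fun z => ∃ c, z ∈ B c) ℱ hg ?_
        ⟨0, Submodule.zero_mem _⟩ ?_
      · intro i x hx
        exact ⟨i, hFB i i le_rfl hx⟩
      · rintro x y ⟨c₁, hc₁⟩ ⟨c₂, hc₂⟩
        exact ⟨max c₁ c₂, Submodule.add_mem _ (hBmono (le_max_left _ _) hc₁)
          (hBmono (le_max_right _ _) hc₂)⟩
    have hSD : ∀ S' : Finset M, ∃ D, ∀ g ∈ S', g ∈ B D := by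
      intro S'
      induction S' using Finset.induction with
      | empty => exact ⟨0, by simp⟩
      | @insert g S'' hnotmem ih =>
        obtain ⟨D₁, hD₁⟩ := ih
        obtain ⟨c, hc⟩ := hGen g
        refine ⟨max c D₁, ?_⟩
        intro g' hg'
        rcases Finset.mem_insert.1 hg' with rfl | hg'
        · exact hBmono (le_max_left _ _) hc
        · exact hBmono (le_max_right _ _) (hD₁ g' hg')
    obtain ⟨D, hD⟩ := hSD S
    refine ⟨D, fun x => ?_⟩
    have hx : x ∈ Submodule.span (Polynomial k) (S : Set M) := hS ▸ Submodule.mem_top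
    clear hS
    induction hx using Submodule.span_induction with
    | mem y hy => exact hD y hy
    | zero => exact Submodule.zero_mem _
    | add y z _ _ hy hz => exact Submodule.add_mem _ hy hz
    | smul f y _ hy =>
      exact aux_poly_smul_mem (fun z hz => hBmono (by omega) (hXB D z hz)) f hy
  obtain ⟨D, hD⟩ := hBD
  have lemA : ∀ x : M, (∀ n : ℕ, ∃ y, x = (Polynomial.X : Polynomial k) ^ n • y) → x = 0 := by
    intro x hx
    apply hzero
    intro i
    set n : ℕ := (D - i).toNat + 1 with hn
    obtain ⟨y, rfl⟩ := hx n
    have h1 : (Polynomial.X : Polynomial k) ^ n • y ∈ B (D - n) := hXnB n D y (hD y)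
    refine hB_ker (D - n) i ?_ _ h1
    have := Int.self_le_toNat (D - i)
    omega
  have subclaim : ∀ a : Polynomial k, a.coeff 0 ≠ 0 → ∀ x : M, a • x = 0 → x = 0 := by
    intro a h0 x hax
    apply lemA
    have it : ∀ n : ℕ, ∃ y, a • y = 0 ∧ x = (Polynomial.X : Polynomial k) ^ n • y := by
      intro n
      induction n with
      | zero => exact ⟨x, hax, by simp⟩
      | succ n ih =>
        obtain ⟨y, hay, hxy⟩ := ih
        set c := a.coeff 0 with hc
        set y' : M := (-c⁻¹) • ((a.divX) • y) with hy'
        have hsplit : (Polynomial.X : Polynomial k) * a.divX + Polynomial.C c = a :=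
          Polynomial.X_mul_divX_add a
        have hkey : y = (Polynomial.X : Polynomial k) • y' := by
          have h2 : (Polynomial.X : Polynomial k) • (a.divX • y) + c • y = 0 := by
            have h4 := congrArg (fun f : Polynomial k => f • y) hsplit
            simp only [add_smul, mul_smul] at h4
            rw [← algebraMap_smul (Polynomial k) c y, Polynomial.algebraMap_eq]
            rw [h4, hay]
          have h3 : c • y = -((Polynomial.X : Polynomial k) • (a.divX • y)) := by
            rw [eq_neg_iff_add_eq_zero, add_comm]; exact h2
          calc y = c⁻¹ • (c • y) := by rw [smul_smul, inv_mul_cancel₀ h0, one_smul]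
            _ = (-c⁻¹) • ((Polynomial.X : Polynomial k) • (a.divX • y)) := by
                rw [h3, smul_neg, ← neg_smul]
            _ = (Polynomial.X : Polynomial k) • y' := by
                rw [hy', ← aux_smul_comm]
        refine ⟨y', ?_, ?_⟩
        · rw [hy']
          rw [aux_smul_comm, smul_smul, mul_comm, ← smul_smul, hay, smul_zero, smul_zero]
        · rw [hxy, hkey, pow_succ, mul_smul]
    intro n
    obtain ⟨y, -, hxy⟩ := it n
    exact ⟨y, hxy⟩
  have claim : ∀ d : ℕ, ∀ a : Polynomial k, a ≠ 0 → a.natDegree ≤ d → ∀ x : M, a • x = 0 →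
      ∃ n : ℕ, (Polynomial.X : Polynomial k) ^ n • x = 0 := by
    intro d
    induction d with
    | zero =>
      intro a ha hdeg x hax
      by_cases h0 : a.coeff 0 = 0
      · exfalso
        apply ha
        have : a = Polynomial.C (a.coeff 0) := Polynomial.eq_C_of_natDegree_le_zero hdeg
        rw [this, h0, map_zero]
      · exact ⟨0, by simp [subclaim a h0 x hax]⟩
    | succ d ih =>
      intro a ha hdeg x hax
      by_cases h0 : a.coeff 0 = 0
      · have hd : a = (Polynomial.X : Polynomial k) * a.divX := by
          conv_lhs => rw [← Polynomial.X_mul_divX_add a]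
          rw [h0, map_zero, add_zero]
        have hdivX0 : a.divX ≠ 0 := by
          intro h
          apply ha
          rw [hd, h, mul_zero]
        have hdeg' : a.divX.natDegree ≤ d := by
          have h1 := Polynomial.natDegree_divX_le (p := a)
          have h2 : a.natDegree ≠ 0 := by
            intro h
            apply ha
            have : a = Polynomial.C (a.coeff 0) := Polynomial.eq_C_of_natDegree_le_zero h.le
            rw [this, h0, map_zero]
          have h3 := Polynomial.natDegree_divX_eq_natDegree_tsub_one (p := a)
          omega
        have h2 : a.divX • ((Polynomial.X : Polynomial k) • x) = 0 := by
          rw [← mul_smul, mul_comm, ← hd, hax]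
        obtain ⟨n, hn⟩ := ih a.divX hdivX0 hdeg' _ h2
        refine ⟨n + 1, ?_⟩
        rw [pow_succ, mul_smul]
        exact hn
      · exact ⟨0, by simp [subclaim a h0 x hax]⟩
  intro x hx
  obtain ⟨⟨a, ha0⟩, ha⟩ := (Submodule.mem_torsion_iff (R := Polynomial k) x).1 hx
  exact claim a.natDegree a (nonZeroDivisors.ne_zero ha0) le_rfl x ha

end AuxGrading

/-- Let `k` be a perfect field of characteristic `p` and `M` a
finitely generated ℤ-graded `k[v]`-module admitting a Frobenius-semilinear bijection
`φ : M/vM → M/(v−1)M`. Then `M` is a free `k[v]`-module. -/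
theorem stmt_14 (p : ℕ) [Fact p.Prime] (k : Type*) [Field k] [CharP k p] [PerfectRing k p]
    (M : Type*) [AddCommGroup M] [Module k M] [Module (Polynomial k) M]
    [IsScalarTower k (Polynomial k) M] [Module.Finite (Polynomial k) M]
    (ℱ : ℤ → Submodule k M) (hint : DirectSum.IsInternal ℱ)
    (hdeg : ∀ i : ℤ, ∀ x ∈ ℱ i, (Polynomial.X : Polynomial k) • x ∈ ℱ (i - 1))
    (σk : k →+* k) (hσk : ∀ c : k, σk c = c ^ p)
    (φ : (M ⧸ (Ideal.span {(Polynomial.X : Polynomial k)} •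
            (⊤ : Submodule (Polynomial k) M))) →ₛₗ[σk]
        (M ⧸ (Ideal.span {(Polynomial.X : Polynomial k) - 1} •
            (⊤ : Submodule (Polynomial k) M))))
    (hφ : Function.Bijective φ) :
    Module.Free (Polynomial k) M := by
  classical
  suffices hT : Submodule.torsion (Polynomial k) M = ⊥ by
    haveI : Module.IsTorsionFree (Polynomial k) M :=
      (Submodule.isTorsionFree_iff_torsion_eq_bot).mpr hT
    exact Module.free_of_finite_type_torsion_free'
  -- evaluation divisibility
  have har0 : ∀ f : Polynomial k,
      (Polynomial.X : Polynomial k) ∣ f - Polynomial.C (f.eval 0) := by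
    intro f
    have := Polynomial.X_sub_C_dvd_sub_C_eval (a := (0 : k)) (p := f)
    simpa using this
  have har1 : ∀ f : Polynomial k,
      ((Polynomial.X : Polynomial k) - 1) ∣ f - Polynomial.C (f.eval 1) := by
    intro f
    have := Polynomial.X_sub_C_dvd_sub_C_eval (a := (1 : k)) (p := f)
    simpa using this
  have hroot0 : (Polynomial.X : Polynomial k).eval 0 = 0 := by simp
  have hroot1 : ((Polynomial.X : Polynomial k) - 1).eval 1 = 0 := by simp
  -- torsion is X-power torsion
  have hpow := aux_torsion_X_power ℱ hint hdeg
  -- uniform bound for torsion annihilation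
  obtain ⟨N, hN⟩ : ∃ N : ℕ, ∀ x ∈ Submodule.torsion (Polynomial k) M,
      (Polynomial.X : Polynomial k) ^ N • x = 0 := by
    obtain ⟨s, hs⟩ := (IsNoetherian.noetherian (Submodule.torsion (Polynomial k) M))
    have hsub : ∀ g ∈ s, (g : M) ∈ Submodule.torsion (Polynomial k) M := by
      intro g hg
      rw [← hs]
      exact Submodule.subset_span hg
    have huni : ∀ s' : Finset M, (∀ g ∈ s', g ∈ Submodule.torsion (Polynomial k) M) →
        ∃ N : ℕ, ∀ g ∈ s', (Polynomial.X : Polynomial k) ^ N • g = 0 := by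
      intro s'
      induction s' using Finset.induction with
      | empty => exact fun _ => ⟨0, by simp⟩
      | @insert g s'' hnotmem ih =>
        intro hmem
        obtain ⟨N₁, hN₁⟩ := ih (fun g' hg' => hmem g' (Finset.mem_insert_of_mem hg'))
        obtain ⟨n, hn⟩ := hpow g (hmem g (Finset.mem_insert_self _ _))
        refine ⟨max n N₁, ?_⟩
        intro g' hg'
        rcases Finset.mem_insert.1 hg' with rfl | hg'
        · obtain ⟨d, hd⟩ : ∃ d, max n N₁ = d + n := ⟨max n N₁ - n, by omega⟩
          rw [hd, pow_add, mul_smul, hn, smul_zero]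
        · obtain ⟨d, hd⟩ : ∃ d, max n N₁ = d + N₁ := ⟨max n N₁ - N₁, by omega⟩
          rw [hd, pow_add, mul_smul, hN₁ g' hg', smul_zero]
    obtain ⟨N, hNs⟩ := huni s hsub
    refine ⟨N, ?_⟩
    intro x hx
    have hx' : x ∈ Submodule.span (Polynomial k) (s : Set M) := by rw [hs]; exact hx
    have : Submodule.span (Polynomial k) (s : Set M) ≤
        LinearMap.ker (LinearMap.lsmul (Polynomial k) M ((Polynomial.X : Polynomial k) ^ N)) := by
      rw [Submodule.span_le]
      intro g hg
      exact LinearMap.mem_ker.2 (hNs g hg)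
    exact LinearMap.mem_ker.1 (this hx')
  -- the torsion-free quotient F
  haveI hFfin : Module.Finite (Polynomial k)
      (M ⧸ Submodule.torsion (Polynomial k) M) :=
    Module.Finite.of_surjective (Submodule.mkQ _) (Submodule.Quotient.mk_surjective _)
  haveI hFfree : Module.Free (Polynomial k) (M ⧸ Submodule.torsion (Polynomial k) M) :=
    Module.free_of_finite_type_torsion_free'
  -- quotient comparison maps
  have hkey : ∀ a : Polynomial k,
      Submodule.map (Submodule.torsion (Polynomial k) M).mkQ
        (Ideal.span {a} • (⊤ : Submodule (Polynomial k) M))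
      = (Ideal.span {a} •
          (⊤ : Submodule (Polynomial k) (M ⧸ Submodule.torsion (Polynomial k) M))) := by
    intro a
    rw [Submodule.map_smul'', Submodule.map_top, Submodule.range_mkQ]
  -- the map g₁
  let g1 := Submodule.mapQ
    (Ideal.span {(Polynomial.X : Polynomial k) - 1} • (⊤ : Submodule (Polynomial k) M))
    (Ideal.span {(Polynomial.X : Polynomial k) - 1} •
      (⊤ : Submodule (Polynomial k) (M ⧸ Submodule.torsion (Polynomial k) M)))
    (Submodule.torsion (Polynomial k) M).mkQ
    (Submodule.map_le_iff_le_comap.mp (le_of_eq (hkey _)))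
  let g0 := Submodule.mapQ
    (Ideal.span {(Polynomial.X : Polynomial k)} • (⊤ : Submodule (Polynomial k) M))
    (Ideal.span {(Polynomial.X : Polynomial k)} •
      (⊤ : Submodule (Polynomial k) (M ⧸ Submodule.torsion (Polynomial k) M)))
    (Submodule.torsion (Polynomial k) M).mkQ
    (Submodule.map_le_iff_le_comap.mp (le_of_eq (hkey _)))
  have hg1surj : Function.Surjective g1 := by
    intro y
    obtain ⟨z, rfl⟩ := Submodule.Quotient.mk_surjective _ y
    obtain ⟨m, rfl⟩ := Submodule.Quotient.mk_surjective _ z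
    exact ⟨Submodule.Quotient.mk m, by rw [Submodule.mapQ_apply]; rfl⟩
  have hg0surj : Function.Surjective g0 := by
    intro y
    obtain ⟨z, rfl⟩ := Submodule.Quotient.mk_surjective _ y
    obtain ⟨m, rfl⟩ := Submodule.Quotient.mk_surjective _ z
    exact ⟨Submodule.Quotient.mk m, by rw [Submodule.mapQ_apply]; rfl⟩
  -- torsion is contained in (X-1)M
  have hTle1 : Submodule.torsion (Polynomial k) M ≤
      Ideal.span {(Polynomial.X : Polynomial k) - 1} • (⊤ : Submodule (Polynomial k) M) := by
    intro t ht
    have hdvd : ((Polynomial.X : Polynomial k) - 1) ∣ (Polynomial.X : Polynomial k) ^ N - 1 := by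
      simpa using sub_dvd_pow_sub_pow (Polynomial.X : Polynomial k) 1 N
    obtain ⟨u, hu⟩ := hdvd
    have h3 : ((Polynomial.X : Polynomial k) ^ N - 1) • t = -t := by
      rw [sub_smul, hN t ht, one_smul, zero_sub]
    have h2 : t = ((Polynomial.X : Polynomial k) - 1) • (-(u • t)) := by
      calc t = -(((Polynomial.X : Polynomial k) ^ N - 1) • t) := by rw [h3, neg_neg]
        _ = -((((Polynomial.X : Polynomial k) - 1) * u) • t) := by rw [← hu]
        _ = ((Polynomial.X : Polynomial k) - 1) • (-(u • t)) := by
            rw [mul_smul, smul_neg]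
    rw [aux_mem_span_smul_top_iff]
    exact ⟨-(u • t), h2⟩
  have hg1inj : Function.Injective g1 := by
    rw [← LinearMap.ker_eq_bot]
    rw [eq_bot_iff]
    intro q hq
    obtain ⟨m, rfl⟩ := Submodule.Quotient.mk_surjective _ q
    have h := LinearMap.mem_ker.1 hq
    rw [Submodule.mapQ_apply, Submodule.Quotient.mk_eq_zero, ← hkey] at h
    obtain ⟨m', hm', hmm⟩ := h
    have hsub : m' - m ∈ Submodule.torsion (Polynomial k) M := by
      rw [← Submodule.Quotient.eq]
      exact hmm
    have hmem : m ∈ Ideal.span {(Polynomial.X : Polynomial k) - 1} •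
        (⊤ : Submodule (Polynomial k) M) := by
      have h5 : m = m' - (m' - m) := (sub_sub_cancel m' m).symm
      rw [h5]
      exact Submodule.sub_mem _ hm' (hTle1 hsub)
    simpa [Submodule.Quotient.mk_eq_zero] using hmem
  -- finite dimensionality
  haveI hQ0fin : Module.Finite k (M ⧸ (Ideal.span {(Polynomial.X : Polynomial k)} •
      (⊤ : Submodule (Polynomial k) M))) := aux_finite_quot har0
  haveI hQ1fin : Module.Finite k (M ⧸ (Ideal.span {(Polynomial.X : Polynomial k) - 1} •
      (⊤ : Submodule (Polynomial k) M))) := aux_finite_quot har1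
  haveI hF0fin : Module.Finite k ((M ⧸ Submodule.torsion (Polynomial k) M) ⧸
      (Ideal.span {(Polynomial.X : Polynomial k)} •
      (⊤ : Submodule (Polynomial k) (M ⧸ Submodule.torsion (Polynomial k) M)))) :=
    aux_finite_quot har0
  haveI hF1fin : Module.Finite k ((M ⧸ Submodule.torsion (Polynomial k) M) ⧸
      (Ideal.span {(Polynomial.X : Polynomial k) - 1} •
      (⊤ : Submodule (Polynomial k) (M ⧸ Submodule.torsion (Polynomial k) M)))) :=
    aux_finite_quot har1
  -- σk is surjective
  have hσsurj : Function.Surjective σk := by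
    have hfr : ∀ c : k, σk c = frobenius k p c := by
      intro c
      rw [hσk c, frobenius_def]
    intro y
    obtain ⟨x, hx⟩ := surjective_frobenius k p y
    exact ⟨x, by rw [hfr, hx]⟩
  -- the chain of finrank equalities
  have hQ01 : Module.finrank k (M ⧸ (Ideal.span {(Polynomial.X : Polynomial k)} •
      (⊤ : Submodule (Polynomial k) M)))
      = Module.finrank k (M ⧸ (Ideal.span {(Polynomial.X : Polynomial k) - 1} •
      (⊤ : Submodule (Polynomial k) M))) :=
    aux_finrank_eq_of_semilinear hσsurj φ hφ
  have hQ1F1 : Module.finrank k (M ⧸ (Ideal.span {(Polynomial.X : Polynomial k) - 1} •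
      (⊤ : Submodule (Polynomial k) M)))
      = Module.finrank k ((M ⧸ Submodule.torsion (Polynomial k) M) ⧸
      (Ideal.span {(Polynomial.X : Polynomial k) - 1} •
      (⊤ : Submodule (Polynomial k) (M ⧸ Submodule.torsion (Polynomial k) M)))) := by
    have hbij : Function.Bijective (g1.restrictScalars k) := by
      rw [LinearMap.coe_restrictScalars]
      exact ⟨hg1inj, hg1surj⟩
    exact (LinearEquiv.ofBijective (g1.restrictScalars k) hbij).finrank_eq
  have hF01 : Module.finrank k ((M ⧸ Submodule.torsion (Polynomial k) M) ⧸
      (Ideal.span {(Polynomial.X : Polynomial k)} •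
      (⊤ : Submodule (Polynomial k) (M ⧸ Submodule.torsion (Polynomial k) M))))
      = Module.finrank k ((M ⧸ Submodule.torsion (Polynomial k) M) ⧸
      (Ideal.span {(Polynomial.X : Polynomial k) - 1} •
      (⊤ : Submodule (Polynomial k) (M ⧸ Submodule.torsion (Polynomial k) M)))) := by
    rw [aux_finrank_quot_free har0 hroot0, aux_finrank_quot_free har1 hroot1]
  -- rank-nullity forces g0 injective
  have hg0inj : Function.Injective g0 := by
    have hrn := LinearMap.finrank_range_add_finrank_ker (g0.restrictScalars k)
    have hrange : LinearMap.range (g0.restrictScalars k) = ⊤ := by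
      rw [LinearMap.range_eq_top]
      rw [LinearMap.coe_restrictScalars]
      exact hg0surj
    rw [hrange, finrank_top] at hrn
    have hkerdim : Module.finrank k (LinearMap.ker (g0.restrictScalars k)) = 0 := by
      have heq : Module.finrank k ((M ⧸ Submodule.torsion (Polynomial k) M) ⧸
          (Ideal.span {(Polynomial.X : Polynomial k)} •
          (⊤ : Submodule (Polynomial k) (M ⧸ Submodule.torsion (Polynomial k) M))))
          = Module.finrank k (M ⧸ (Ideal.span {(Polynomial.X : Polynomial k)} •
          (⊤ : Submodule (Polynomial k) M))) := by
        rw [hF01, ← hQ1F1, ← hQ01]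
      omega
    have hker : LinearMap.ker (g0.restrictScalars k) = ⊥ :=
      Submodule.finrank_eq_zero.1 hkerdim
    rw [← LinearMap.ker_eq_bot]
    rw [eq_bot_iff]
    intro q hq
    have : q ∈ LinearMap.ker (g0.restrictScalars k) := by
      rw [LinearMap.mem_ker] at hq ⊢
      exact hq
    rw [hker] at this
    exact this
  -- torsion is contained in X•M
  have hTle0 : Submodule.torsion (Polynomial k) M ≤
      Ideal.span {(Polynomial.X : Polynomial k)} • (⊤ : Submodule (Polynomial k) M) := by
    intro t ht
    have h1 : g0 (Submodule.Quotient.mk t) = 0 := by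
      rw [Submodule.mapQ_apply]
      have h2 : (Submodule.torsion (Polynomial k) M).mkQ t = 0 := by
        rw [Submodule.mkQ_apply, Submodule.Quotient.mk_eq_zero]
        exact ht
      rw [h2]
      exact Submodule.Quotient.mk_zero _
    have h3 : (Submodule.Quotient.mk t : M ⧸ (Ideal.span {(Polynomial.X : Polynomial k)} •
        (⊤ : Submodule (Polynomial k) M))) = 0 := by
      apply hg0inj
      rw [h1, map_zero]
    rwa [Submodule.Quotient.mk_eq_zero] at h3
  -- conclude : T = X^N T = 0
  have hstep : ∀ t ∈ Submodule.torsion (Polynomial k) M,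
      ∃ s ∈ Submodule.torsion (Polynomial k) M, t = (Polynomial.X : Polynomial k) • s := by
    intro t ht
    have := hTle0 ht
    rw [aux_mem_span_smul_top_iff] at this
    obtain ⟨y, hy⟩ := this
    refine ⟨y, ?_, hy⟩
    refine (Submodule.mem_torsion_iff (R := Polynomial k) y).2
      ⟨⟨(Polynomial.X : Polynomial k) ^ (N + 1),
        mem_nonZeroDivisors_of_ne_zero (pow_ne_zero _ Polynomial.X_ne_zero)⟩, ?_⟩
    show ((Polynomial.X : Polynomial k) ^ (N + 1)) • y = 0
    rw [pow_succ, mul_smul, ← hy]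
    exact hN t ht
  have hiter : ∀ n : ℕ, ∀ t ∈ Submodule.torsion (Polynomial k) M,
      ∃ s ∈ Submodule.torsion (Polynomial k) M, t = (Polynomial.X : Polynomial k) ^ n • s := by
    intro n
    induction n with
    | zero => exact fun t ht => ⟨t, ht, by simp⟩
    | succ n ih =>
      intro t ht
      obtain ⟨s, hsT, rfl⟩ := ih t ht
      obtain ⟨s', hs'T, rfl⟩ := hstep s hsT
      exact ⟨s', hs'T, by rw [← mul_smul, ← pow_succ]⟩
  rw [eq_bot_iff]
  intro t ht
  obtain ⟨s, hsT, rfl⟩ := hiter N t ht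
  rw [hN s hsT]
  exact Submodule.zero_mem ⊥
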